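/- Assume ∫_{−∞}^∞ q(t) dt = ∞, so that d(x) is well-defined for every x ∈ ℝ. Then the following two conditions are equivalent: (i) for every a ∈ (0,∞), ∫_{x−a}^{x+a} q(t) dt → ∞ as |x| → ∞; (ii) d(x) → 0 as |x| → ∞. -/

import Mathlib

open MeasureTheory Filter Topology Set
open scoped ENNReal

/-- The function `d(x) = inf { d > 0 : ∫_{x-d}^{x+d} q = 2 }`. -/
noncomputable def dq (q : ℝ → ℝ) (x : ℝ) : ℝ :=
  sInf {d : ℝ | 0 < d ∧ ∫ t in x - d..x + d, q t = 2}

private lemma iiq {q : ℝ → ℝ} (hqloc : LocallyIntegrable q volume) (a b : ℝ) :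
    IntervalIntegrable q volume a b :=
  ((hqloc.locallyIntegrableOn _).integrableOn_isCompact isCompact_uIcc).intervalIntegrable

private lemma F_nonpos {q : ℝ → ℝ} (hq : ∀ x, 0 ≤ q x) (x d : ℝ) (hd : d ≤ 0) :
    ∫ t in x - d..x + d, q t ≤ 0 := by
  have h1 : (0:ℝ) ≤ ∫ t in x + d..x - d, q t :=
    intervalIntegral.integral_nonneg (by linarith) (fun u _ => hq u)
  rw [intervalIntegral.integral_symm]
  linarith

private lemma pos_of_eq_two {q : ℝ → ℝ} (hq : ∀ x, 0 ≤ q x) {x d : ℝ}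
    (hd : ∫ t in x - d..x + d, q t = 2) : 0 < d := by
  by_contra hd'
  have := F_nonpos hq x d (le_of_not_gt hd')
  rw [hd] at this; linarith

private lemma setEq {q : ℝ → ℝ} (hq : ∀ x, 0 ≤ q x) (x : ℝ) :
    {d : ℝ | 0 < d ∧ ∫ t in x - d..x + d, q t = 2}
      = {d : ℝ | ∫ t in x - d..x + d, q t = 2} := by
  ext d
  exact ⟨fun h => h.2, fun h => ⟨pos_of_eq_two hq h, h⟩⟩

private lemma Fcont {q : ℝ → ℝ} (hqloc : LocallyIntegrable q volume) (x : ℝ) :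
    Continuous fun d : ℝ => ∫ t in x - d..x + d, q t := by
  have hG : Continuous fun y : ℝ => ∫ t in (0:ℝ)..y, q t :=
    intervalIntegral.continuous_primitive (iiq hqloc) 0
  have heq : ∀ d : ℝ, ∫ t in x - d..x + d, q t
      = (∫ t in (0:ℝ)..x + d, q t) - ∫ t in (0:ℝ)..x - d, q t := fun d =>
    (intervalIntegral.integral_interval_sub_left (iiq hqloc 0 (x + d))
      (iiq hqloc 0 (x - d))).symm
  simp only [heq]
  exact (hG.comp (continuous_const.add continuous_id)).sub
    (hG.comp (continuous_const.sub continuous_id))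

private lemma exists_two_le {q : ℝ → ℝ} (hq : ∀ x, 0 ≤ q x)
    (hqloc : LocallyIntegrable q volume)
    (hqint : ∫⁻ x : ℝ, ENNReal.ofReal (q x) = ⊤) (x : ℝ) :
    ∃ d : ℝ, 0 < d ∧ 2 ≤ ∫ t in x - d..x + d, q t := by
  by_contra hcon
  push_neg at hcon
  set ν := volume.withDensity fun t => ENNReal.ofReal (q t) with hν
  have hcover : (⋃ n : ℕ, Ioc (x - (n + 1)) (x + (n + 1))) = univ := by
    ext t
    simp only [mem_iUnion, mem_Ioc, mem_univ, iff_true]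
    obtain ⟨n, hn⟩ := exists_nat_ge |t - x|
    have h1 := abs_le.mp hn
    exact ⟨n, by constructor <;> [linarith [h1.2]; linarith [h1.1]]⟩
  have hmono : Monotone fun n : ℕ => Ioc (x - (n + 1 : ℝ)) (x + (n + 1)) := by
    intro m n hmn
    have : (m : ℝ) ≤ n := Nat.cast_le.mpr hmn
    apply Ioc_subset_Ioc <;> linarith
  have htop : ν univ = ⊤ := by
    rw [hν, withDensity_apply _ MeasurableSet.univ, Measure.restrict_univ]
    exact hqint
  have hbound : ∀ n : ℕ, ν (Ioc (x - (n + 1 : ℝ)) (x + (n + 1))) ≤ ENNReal.ofReal 2 := by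
    intro n
    have hle : x - (n + 1 : ℝ) ≤ x + (n + 1) := by
      have : (0:ℝ) ≤ n := Nat.cast_nonneg n
      linarith
    have hint : IntegrableOn q (Ioc (x - (n + 1 : ℝ)) (x + (n + 1))) volume :=
      (intervalIntegrable_iff_integrableOn_Ioc_of_le hle).mp (iiq hqloc _ _)
    rw [hν, withDensity_apply _ measurableSet_Ioc,
      ← ofReal_integral_eq_lintegral_ofReal hint (Eventually.of_forall hq)]
    apply ENNReal.ofReal_le_ofReal
    rw [← intervalIntegral.integral_of_le hle]
    exact (hcon _ (by positivity)).le
  rw [← hcover, hmono.measure_iUnion] at htop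
  have hle2 : (⊤ : ℝ≥0∞) ≤ ENNReal.ofReal 2 := htop ▸ iSup_le hbound
  exact (lt_of_lt_of_le ENNReal.ofReal_lt_top hle2).false

private lemma exists_eq_two {q : ℝ → ℝ} (hq : ∀ x, 0 ≤ q x)
    (hqloc : LocallyIntegrable q volume) {x a : ℝ} (ha : 0 < a)
    (h2 : 2 ≤ ∫ t in x - a..x + a, q t) :
    ∃ c, 0 < c ∧ c ≤ a ∧ ∫ t in x - c..x + c, q t = 2 := by
  have h0 : (fun d : ℝ => ∫ t in x - d..x + d, q t) 0 = 0 := by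
    simp
  have hivt := intermediate_value_Icc ha.le (Fcont hqloc x).continuousOn
  have h2mem : (2:ℝ) ∈ Icc ((fun d : ℝ => ∫ t in x - d..x + d, q t) 0)
      ((fun d : ℝ => ∫ t in x - d..x + d, q t) a) := by
    rw [h0]
    exact ⟨by norm_num, h2⟩
  obtain ⟨c, hc, hfc⟩ := hivt h2mem
  exact ⟨c, pos_of_eq_two hq hfc, hc.2, hfc⟩

private lemma dq_spec {q : ℝ → ℝ} (hq : ∀ x, 0 ≤ q x)
    (hqloc : LocallyIntegrable q volume)
    (hqint : ∫⁻ x : ℝ, ENNReal.ofReal (q x) = ⊤) (x : ℝ) :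
    0 < dq q x ∧ ∫ t in x - dq q x..x + dq q x, q t = 2 := by
  have hclosed : IsClosed {d : ℝ | ∫ t in x - d..x + d, q t = 2} :=
    isClosed_singleton.preimage (Fcont hqloc x)
  have hne : {d : ℝ | ∫ t in x - d..x + d, q t = 2}.Nonempty := by
    obtain ⟨d, hd0, hd2⟩ := exists_two_le hq hqloc hqint x
    obtain ⟨c, _, _, hc2⟩ := exists_eq_two hq hqloc hd0 hd2
    exact ⟨c, hc2⟩
  have hbdd : BddBelow {d : ℝ | ∫ t in x - d..x + d, q t = 2} :=
    ⟨0, fun d hd => (pos_of_eq_two hq hd).le⟩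
  have hmem := hclosed.csInf_mem hne hbdd
  rw [dq, setEq hq]
  exact ⟨pos_of_eq_two hq hmem, hmem⟩

private lemma dq_le {q : ℝ → ℝ} (hq : ∀ x, 0 ≤ q x) (x c : ℝ)
    (hc : ∫ t in x - c..x + c, q t = 2) : dq q x ≤ c := by
  rw [dq, setEq hq]
  exact csInf_le ⟨0, fun d hd => (pos_of_eq_two hq hd).le⟩ hc

private lemma key {q : ℝ → ℝ} (hq : ∀ x, 0 ≤ q x)
    (hqloc : LocallyIntegrable q volume)
    (hqint : ∫⁻ x : ℝ, ENNReal.ofReal (q x) = ⊤)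
    {a : ℝ} (ha : 0 < a) (n : ℕ) (x : ℝ)
    (hsm : ∀ y : ℝ, x - a ≤ y → y ≤ x + a → dq q y ≤ a / (n + 1)) :
    2 * ((n : ℝ) + 1) ≤ ∫ t in x - a..x + a, q t := by
  set δ := a / (n + 1 : ℝ) with hδdef
  have hδ : 0 < δ := by positivity
  have hδa : ((n : ℝ) + 1) * δ = a := by
    rw [hδdef]
    field_simp
  set c : ℕ → ℝ := fun k => x - a + 2 * k * δ with hc
  have hsum := intervalIntegral.sum_integral_adjacent_intervals
      (f := q) (μ := volume) (a := c) (n := n + 1) (fun k _ => iiq hqloc _ _)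
  have hc0 : c 0 = x - a := by simp [hc]
  have hcn : c (n + 1) = x + a := by
    simp only [hc]
    push_cast
    nlinarith [hδa]
  have hterm : ∀ k, k < n + 1 → (2:ℝ) ≤ ∫ t in c k..c (k + 1), q t := by
    intro k hk
    set y := x - a + (2 * k + 1) * δ with hy
    have hk' : (k : ℝ) ≤ n := Nat.cast_le.mpr (Nat.lt_succ_iff.mp hk)
    have h1 : x - a ≤ y := by
      have : (0:ℝ) ≤ (2 * k + 1) * δ := by positivity
      linarith
    have h2 : y ≤ x + a := by nlinarith
    have hdqy := hsm y h1 h2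
    have hdq := dq_spec hq hqloc hqint y
    calc (2:ℝ) = ∫ t in y - dq q y..y + dq q y, q t := hdq.2.symm
      _ ≤ ∫ t in y - δ..y + δ, q t :=
          intervalIntegral.integral_mono_interval (by linarith) (by linarith [hdq.1])
            (by linarith) (Eventually.of_forall hq) (iiq hqloc _ _)
      _ = ∫ t in c k..c (k + 1), q t := by
          rw [hy]
          congr 1 <;> · simp only [hc]; push_cast; ring
  have hge : 2 * ((n : ℝ) + 1) ≤ ∑ k ∈ Finset.range (n + 1), ∫ t in c k..c (k + 1), q t := by
    calc 2 * ((n : ℝ) + 1) = ∑ _k ∈ Finset.range (n + 1), (2:ℝ) := by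
          rw [Finset.sum_const, Finset.card_range]
          push_cast
          ring
      _ ≤ _ := Finset.sum_le_sum fun k hk => hterm k (Finset.mem_range.mp hk)
  rw [hsum, hc0, hcn] at hge
  exact hge

theorem stmt5 (q : ℝ → ℝ) (hq : ∀ x, 0 ≤ q x)
    (hqloc : LocallyIntegrable q volume)
    (hqint : ∫⁻ x : ℝ, ENNReal.ofReal (q x) = ⊤) :
    (∀ a : ℝ, 0 < a →
        Tendsto (fun x : ℝ => ∫ t in x - a..x + a, q t) (cocompact ℝ) atTop) ↔
      Tendsto (dq q) (cocompact ℝ) (𝓝 0) := by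
  constructor
  · intro h
    rw [Metric.tendsto_nhds]
    intro ε hε
    filter_upwards [(h (ε / 2) (by linarith)).eventually_ge_atTop 2] with x hx
    obtain ⟨c, hc0, hcε, hc2⟩ := exists_eq_two hq hqloc (by linarith : (0:ℝ) < ε / 2) hx
    have hle := dq_le hq x c hc2
    have hpos := (dq_spec hq hqloc hqint x).1
    rw [Real.dist_eq, sub_zero, abs_of_pos hpos]
    linarith
  · intro h a ha
    rw [tendsto_atTop]
    intro M
    obtain ⟨m, hm⟩ := exists_nat_ge (M / 2)
    have hδ : 0 < a / (m + 1 : ℝ) := by positivity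
    have hsmall : ∀ᶠ y in cocompact ℝ, dq q y ≤ a / (m + 1 : ℝ) := by
      filter_upwards [Metric.tendsto_nhds.mp h _ hδ] with y hy
      rw [Real.dist_eq, sub_zero] at hy
      exact (le_abs_self _).trans hy.le
    rw [cocompact_eq_atBot_atTop, eventually_sup] at hsmall ⊢
    obtain ⟨hBot, hTop⟩ := hsmall
    obtain ⟨R₁, hR₁⟩ := eventually_atBot.mp hBot
    obtain ⟨R₂, hR₂⟩ := eventually_atTop.mp hTop
    have hMle : M ≤ 2 * ((m : ℝ) + 1) := by linarith
    constructor
    · rw [eventually_atBot]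
      refine ⟨R₁ - a, fun x hx => ?_⟩
      have hk := key hq hqloc hqint ha m x (fun y h1 h2 => hR₁ y (by linarith))
      linarith
    · rw [eventually_atTop]
      refine ⟨R₂ + a, fun x hx => ?_⟩
      have hk := key hq hqloc hqint ha m x (fun y h1 h2 => hR₂ y (by linarith))
      linarith
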